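/- Let X = (X_d, d ∈ D(N)) be a random network on a finite node set N, with Möbius parameters z_B = P(X_d = 1 for all d ∈ B) for nonempty B ⊆ D(N). Then X is exchangeable and dissociated if and only if the following two conditions hold: (i) z_C = z_{C′} whenever C and C′ are nonempty connected edge sets with isomorphic associated graphs; and (ii) for every simple graph x on N, P(X = x) = Σ_{B : E(x) ⊆ B ⊆ D(N)} (−1)^{|B| − |E(x)|} Π_{C} z_C, where the product runs over the edge sets C of the connected components of the graph with edge set B. -/

import Mathlib

open MeasureTheory

/-- The type of dyads over a node set `V`: unordered pairs of distinct nodes. -/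
abbrev Dyad (V : Type*) : Type _ := {d : Sym2 V // ¬ d.IsDiag}

/-- The action of a permutation of the node set on dyads. -/
def dyadPerm {V : Type*} (π : Equiv.Perm V) (d : Dyad V) : Dyad V :=
  ⟨d.1.map π, by rw [Sym2.isDiag_map (Equiv.injective π)]; exact d.2⟩

/-- A random network `X = (X_d, d ∈ D(N))` is exchangeable if its joint distribution
is invariant under every relabeling of the node set. -/
def IsExchangeable {V Ω : Type*} [MeasurableSpace Ω] (μ : Measure Ω)
    (X : Dyad V → Ω → Bool) : Prop :=
  ∀ (π : Equiv.Perm V) (f : Dyad V → Bool),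
    μ {ω | ∀ d : Dyad V, X (dyadPerm π d) ω = f d} = μ {ω | ∀ d : Dyad V, X d ω = f d}

/-- Both endpoints of the dyad `d` belong to the node set `s`. -/
def dyadIn {V : Type*} (d : Dyad V) (s : Set V) : Prop := ∀ v ∈ d.1, v ∈ s

/-- A random network is dissociated if, for every pair of disjoint node sets `N₁`, `N₂`,
the families `(X_d : d ∈ D(N₁))` and `(X_d : d ∈ D(N₂))` are independent. -/
def IsDissociated {V Ω : Type*} [MeasurableSpace Ω] (μ : Measure Ω)
    (X : Dyad V → Ω → Bool) : Prop :=
  ∀ N₁ N₂ : Set V, Disjoint N₁ N₂ → ∀ f g : Dyad V → Bool,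
    μ ({ω | ∀ d : Dyad V, dyadIn d N₁ → X d ω = f d} ∩
        {ω | ∀ d : Dyad V, dyadIn d N₂ → X d ω = g d})
      = μ {ω | ∀ d : Dyad V, dyadIn d N₁ → X d ω = f d} *
          μ {ω | ∀ d : Dyad V, dyadIn d N₂ → X d ω = g d}

/-- The set of nodes covered by a set of dyads `C`. -/
def dyadSupp {V : Type*} (C : Set (Dyad V)) : Set V := {v | ∃ d ∈ C, v ∈ d.1}

/-- The graph on the node set `V` whose edges are the dyads in `C`. -/
def graphOfDyads {V : Type*} (C : Set (Dyad V)) : SimpleGraph V :=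
  SimpleGraph.fromEdgeSet (Subtype.val '' C)

/-- `C` is a nonempty connected edge set: the graph it spans (viewed without isolated
vertices, i.e. on its support) is connected. -/
def IsConnEdgeSet {V : Type*} (C : Set (Dyad V)) : Prop :=
  C.Nonempty ∧ ∀ u ∈ dyadSupp C, ∀ v ∈ dyadSupp C, (graphOfDyads C).Reachable u v

/-- The edge sets of the connected components of the graph with edge set `B`. -/
noncomputable def componentsOf {V : Type*} [Fintype V] [DecidableEq V]
    (B : Finset (Dyad V)) : Finset (Finset (Dyad V)) := by
  classical
  exact B.image fun d => B.filter fun e =>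
    ∃ u v, u ∈ d.1 ∧ v ∈ e.1 ∧ (graphOfDyads (↑B : Set (Dyad V))).Reachable u v

/-- The Möbius parameter `z_B = P(X_d = 1 for all d ∈ B)`, as a real number. -/
noncomputable def zParam {V Ω : Type*} [MeasurableSpace Ω] (μ : Measure Ω)
    (X : Dyad V → Ω → Bool) (B : Finset (Dyad V)) : ℝ :=
  (μ {ω | ∀ d ∈ B, X d ω = true}).toReal


set_option linter.unusedSectionVars false

section Graph

variable {V : Type*} [Fintype V] [DecidableEq V]

/-- The reachability relation between dyads of `B`. -/
def dyadRel (B : Finset (Dyad V)) (d e : Dyad V) : Prop :=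
  ∃ u v, u ∈ d.1 ∧ v ∈ e.1 ∧ (graphOfDyads (↑B : Set (Dyad V))).Reachable u v

lemma mem_componentsOf {B C : Finset (Dyad V)} :
    C ∈ componentsOf B ↔ ∃ d ∈ B, (∀ e, e ∈ C ↔ e ∈ B ∧ dyadRel B d e) := by
  classical
  unfold componentsOf
  simp only [Finset.mem_image]
  constructor
  · rintro ⟨d, hd, rfl⟩
    exact ⟨d, hd, fun e => by simp [Finset.mem_filter, dyadRel]⟩
  · rintro ⟨d, hd, he⟩
    refine ⟨d, hd, ?_⟩
    ext e
    simp [Finset.mem_filter, he e, dyadRel]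

lemma graphOfDyads_adj {C : Set (Dyad V)} {a b : V} :
    (graphOfDyads C).Adj a b ↔ (∃ d ∈ C, d.1 = s(a, b)) ∧ a ≠ b := by
  simp [graphOfDyads, SimpleGraph.fromEdgeSet_adj, Set.mem_image]

lemma reach_of_mem {C : Set (Dyad V)} {d : Dyad V} (hd : d ∈ C) {u v : V}
    (hu : u ∈ d.1) (hv : v ∈ d.1) : (graphOfDyads C).Reachable u v := by
  by_cases huv : u = v
  · subst huv; exact SimpleGraph.Reachable.refl u
  · exact SimpleGraph.Adj.reachable
      (graphOfDyads_adj.2 ⟨⟨d, hd, (Sym2.mem_and_mem_iff huv).1 ⟨hu, hv⟩⟩, huv⟩)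

lemma dyadRel_refl {B : Finset (Dyad V)} {d : Dyad V} : dyadRel B d d := by
  exact ⟨d.1.out.1, d.1.out.1, Sym2.out_fst_mem d.1, Sym2.out_fst_mem d.1,
    SimpleGraph.Reachable.refl _⟩

/-- all-endpoints version of `dyadRel`. -/
lemma dyadRel_all {B : Finset (Dyad V)} {d e : Dyad V} (hd : d ∈ B) (he : e ∈ B)
    (h : dyadRel B d e) {u v : V} (hu : u ∈ d.1) (hv : v ∈ e.1) :
    (graphOfDyads (↑B : Set (Dyad V))).Reachable u v := by
  obtain ⟨u', v', hu', hv', hr⟩ := h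
  exact ((reach_of_mem hd hu hu').trans hr).trans (reach_of_mem he hv' hv)

lemma dyadRel_symm {B : Finset (Dyad V)} {d e : Dyad V} (h : dyadRel B d e) :
    dyadRel B e d := by
  obtain ⟨u, v, hu, hv, hr⟩ := h
  exact ⟨v, u, hv, hu, hr.symm⟩

lemma dyadRel_trans {B : Finset (Dyad V)} {d e f : Dyad V} (he : e ∈ B)
    (h1 : dyadRel B d e) (h2 : dyadRel B e f) : dyadRel B d f := by
  obtain ⟨u, v, hu, hv, hr⟩ := h1
  obtain ⟨u', v', hu', hv', hr'⟩ := h2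
  exact ⟨u, v', hu, hv', (hr.trans (reach_of_mem he hv hu')).trans hr'⟩

end Graph

section Graph2
set_option linter.unusedSectionVars false
variable {V : Type*} [Fintype V] [DecidableEq V]

lemma edgeSet_graphOfDyads (C : Set (Dyad V)) :
    (graphOfDyads C).edgeSet = Subtype.val '' C := by
  rw [graphOfDyads, SimpleGraph.edgeSet_fromEdgeSet]
  ext e
  simp only [Set.mem_diff, Set.mem_setOf_eq, and_iff_left_iff_imp]
  rintro ⟨d, _, rfl⟩
  exact d.2

lemma walk_stay {B C : Finset (Dyad V)}
    (hclosed : ∀ e ∈ B, (∃ x, x ∈ e.1 ∧ x ∈ dyadSupp (↑C : Set (Dyad V))) → e ∈ C)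
    {u v : V} (w : (graphOfDyads (↑B : Set (Dyad V))).Walk u v) :
    u ∈ dyadSupp (↑C : Set (Dyad V)) →
    (∀ e ∈ w.edges, e ∈ (graphOfDyads (↑C : Set (Dyad V))).edgeSet) ∧
      v ∈ dyadSupp (↑C : Set (Dyad V)) := by
  induction w with
  | nil => intro hu; exact ⟨by simp, hu⟩
  | @cons a b c h p ih =>
    intro hu
    rw [graphOfDyads_adj] at h
    obtain ⟨⟨d, hdB, hd1⟩, hne⟩ := h
    have haD : a ∈ d.1 := by rw [hd1]; exact Sym2.mem_mk_left a b
    have hbD : b ∈ d.1 := by rw [hd1]; exact Sym2.mem_mk_right a b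
    have hdC : d ∈ C := hclosed d hdB ⟨a, haD, hu⟩
    have hb : b ∈ dyadSupp (↑C : Set (Dyad V)) := ⟨d, hdC, hbD⟩
    obtain ⟨hedges, hc⟩ := ih hb
    refine ⟨?_, hc⟩
    intro e he
    rw [SimpleGraph.Walk.edges_cons, List.mem_cons] at he
    rcases he with rfl | he
    · rw [edgeSet_graphOfDyads]
      exact ⟨d, hdC, hd1⟩
    · exact hedges e he

lemma reach_stay {B C : Finset (Dyad V)}
    (hclosed : ∀ e ∈ B, (∃ x, x ∈ e.1 ∧ x ∈ dyadSupp (↑C : Set (Dyad V))) → e ∈ C)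
    {u v : V} (hu : u ∈ dyadSupp (↑C : Set (Dyad V)))
    (h : (graphOfDyads (↑B : Set (Dyad V))).Reachable u v) :
    (graphOfDyads (↑C : Set (Dyad V))).Reachable u v ∧
      v ∈ dyadSupp (↑C : Set (Dyad V)) := by
  obtain ⟨w⟩ := h
  obtain ⟨he, hv⟩ := walk_stay hclosed w hu
  exact ⟨⟨w.transfer _ he⟩, hv⟩

lemma graphOfDyads_mono {C B : Finset (Dyad V)} (h : C ⊆ B) :
    graphOfDyads (↑C : Set (Dyad V)) ≤ graphOfDyads (↑B : Set (Dyad V)) :=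
  SimpleGraph.fromEdgeSet_mono (Set.image_mono (by exact_mod_cast h))

/-- The component (equivalence class) of the dyad `d` in `B`. -/
noncomputable def cls (B : Finset (Dyad V)) (d : Dyad V) : Finset (Dyad V) := by
  classical exact B.filter (dyadRel B d)

lemma mem_cls {B : Finset (Dyad V)} {d e : Dyad V} :
    e ∈ cls B d ↔ e ∈ B ∧ dyadRel B d e := by
  classical
  unfold cls
  simp [Finset.mem_filter]

lemma componentsOf_eq (B : Finset (Dyad V)) :
    componentsOf B = B.image (cls B) := by
  ext C
  rw [mem_componentsOf, Finset.mem_image]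
  constructor
  · rintro ⟨d, hd, h⟩
    refine ⟨d, hd, ?_⟩
    ext e
    rw [mem_cls, h e]
  · rintro ⟨d, hd, rfl⟩
    exact ⟨d, hd, fun e => mem_cls⟩

lemma cls_subset {B : Finset (Dyad V)} {d : Dyad V} : cls B d ⊆ B :=
  fun e he => (mem_cls.1 he).1

lemma mem_cls_self {B : Finset (Dyad V)} {d : Dyad V} (hd : d ∈ B) : d ∈ cls B d :=
  mem_cls.2 ⟨hd, dyadRel_refl⟩

lemma cls_closed {B : Finset (Dyad V)} {d : Dyad V} :
    ∀ e ∈ B, (∃ x, x ∈ e.1 ∧ x ∈ dyadSupp (↑(cls B d) : Set (Dyad V))) → e ∈ cls B d := by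
  rintro e heB ⟨x, hxe, e', he', hxe'⟩
  have he'c : e' ∈ cls B d := he'
  obtain ⟨he'B, hrel⟩ := mem_cls.1 he'c
  exact mem_cls.2 ⟨heB, dyadRel_trans he'B hrel ⟨x, x, hxe', hxe, SimpleGraph.Reachable.refl x⟩⟩

end Graph2

section Graph3
set_option linter.unusedSectionVars false
variable {V : Type*} [Fintype V] [DecidableEq V]

lemma cls_conn {B : Finset (Dyad V)} {d : Dyad V} (hd : d ∈ B) :
    IsConnEdgeSet (↑(cls B d) : Set (Dyad V)) := by
  refine ⟨⟨d, mem_cls_self hd⟩, ?_⟩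
  rintro u ⟨e, he, hue⟩ v ⟨e', he', hve'⟩
  have he : e ∈ cls B d := he
  have he' : e' ∈ cls B d := he'
  obtain ⟨heB, hrel⟩ := mem_cls.1 he
  obtain ⟨he'B, hrel'⟩ := mem_cls.1 he'
  have hreach : (graphOfDyads (↑B : Set (Dyad V))).Reachable u v :=
    dyadRel_all heB he'B (dyadRel_trans hd (dyadRel_symm hrel) hrel') hue hve'
  exact (reach_stay cls_closed ⟨e, he, hue⟩ hreach).1

lemma cls_eq_of_rel {B : Finset (Dyad V)} {d d' : Dyad V} (hd : d ∈ B) (hd' : d' ∈ B)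
    (h : dyadRel B d d') : cls B d = cls B d' := by
  ext e
  simp only [mem_cls, and_congr_right_iff]
  exact fun heB => ⟨fun h2 => dyadRel_trans hd (dyadRel_symm h) h2,
    fun h2 => dyadRel_trans hd' h h2⟩

lemma cls_eq_of_supp {B : Finset (Dyad V)} {d d' : Dyad V} (hd : d ∈ B) (hd' : d' ∈ B)
    {x : V} (hx : x ∈ dyadSupp (↑(cls B d) : Set (Dyad V)))
    (hx' : x ∈ dyadSupp (↑(cls B d') : Set (Dyad V))) : cls B d = cls B d' := by
  obtain ⟨e, he, hxe⟩ := hx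
  obtain ⟨e', he', hxe'⟩ := hx'
  have he : e ∈ cls B d := he
  have he' : e' ∈ cls B d' := he'
  obtain ⟨heB, hrel⟩ := mem_cls.1 he
  obtain ⟨he'B, hrel'⟩ := mem_cls.1 he'
  exact cls_eq_of_rel hd hd' (dyadRel_trans he'B
    (dyadRel_trans heB hrel ⟨x, x, hxe, hxe', SimpleGraph.Reachable.refl x⟩)
    (dyadRel_symm hrel'))

lemma dyadSupp_mono {C C' : Finset (Dyad V)} (h : C ⊆ C') :
    dyadSupp (↑C : Set (Dyad V)) ⊆ dyadSupp (↑C' : Set (Dyad V)) := by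
  rintro x ⟨e, he, hxe⟩
  exact ⟨e, h he, hxe⟩

/-- In a support-disjoint union, classes of dyads of `B₁` are computed in `B₁`. -/
lemma cls_union_left {B₁ B₂ : Finset (Dyad V)}
    (hsupp : Disjoint (dyadSupp (↑B₁ : Set (Dyad V))) (dyadSupp (↑B₂ : Set (Dyad V))))
    {d : Dyad V} (hd : d ∈ B₁) : cls (B₁ ∪ B₂) d = cls B₁ d := by
  have hclosed : ∀ e ∈ B₁ ∪ B₂,
      (∃ x, x ∈ e.1 ∧ x ∈ dyadSupp (↑B₁ : Set (Dyad V))) → e ∈ B₁ := by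
    rintro e he ⟨x, hxe, hx⟩
    rcases Finset.mem_union.1 he with h1 | h2
    · exact h1
    · exact absurd (hsupp.ne_of_mem hx ⟨e, h2, hxe⟩ rfl) (fun h => h)
  ext e
  simp only [mem_cls, Finset.mem_union]
  constructor
  · rintro ⟨heB, u, v, hud, hve, hreach⟩
    have hu : u ∈ dyadSupp (↑B₁ : Set (Dyad V)) := ⟨d, hd, hud⟩
    obtain ⟨hreach', hv⟩ := reach_stay (C := B₁) hclosed hu hreach
    have heB1 : e ∈ B₁ := hclosed e (Finset.mem_union.2 heB) ⟨v, hve, hv⟩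
    exact ⟨heB1, u, v, hud, hve, hreach'⟩
  · rintro ⟨heB, u, v, hud, hve, hreach⟩
    exact ⟨Or.inl heB, u, v, hud, hve,
      hreach.mono (graphOfDyads_mono Finset.subset_union_left)⟩

lemma componentsOf_union {B₁ B₂ : Finset (Dyad V)}
    (hsupp : Disjoint (dyadSupp (↑B₁ : Set (Dyad V))) (dyadSupp (↑B₂ : Set (Dyad V)))) :
    componentsOf (B₁ ∪ B₂) = componentsOf B₁ ∪ componentsOf B₂ := by
  rw [componentsOf_eq, componentsOf_eq, componentsOf_eq, Finset.image_union]
  congr 1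
  · exact Finset.image_congr (fun d hd => cls_union_left hsupp hd)
  · refine Finset.image_congr (fun d hd => ?_)
    rw [Finset.union_comm]
    exact cls_union_left hsupp.symm hd

lemma componentsOf_of_conn {C : Finset (Dyad V)}
    (h : IsConnEdgeSet (↑C : Set (Dyad V))) : componentsOf C = {C} := by
  obtain ⟨hne, hconn⟩ := h
  have hne' : C.Nonempty := by
    obtain ⟨d, hd⟩ := hne
    exact ⟨d, hd⟩
  rw [componentsOf_eq]
  have : ∀ d ∈ C, cls C d = C := by
    intro d hd
    ext e
    simp only [mem_cls, and_iff_left_iff_imp]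
    intro he
    exact ⟨d.1.out.1, e.1.out.1, Sym2.out_fst_mem _, Sym2.out_fst_mem _,
      hconn _ ⟨d, hd, Sym2.out_fst_mem _⟩ _ ⟨e, he, Sym2.out_fst_mem _⟩⟩
  rw [Finset.image_congr this, Finset.image_const hne']

lemma componentsOf_empty : componentsOf (∅ : Finset (Dyad V)) = ∅ := by
  rw [componentsOf_eq, Finset.image_empty]

lemma mem_componentsOf_subset {B C : Finset (Dyad V)} (h : C ∈ componentsOf B) :
    C ⊆ B := by
  rw [componentsOf_eq, Finset.mem_image] at h
  obtain ⟨d, _, rfl⟩ := h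
  exact cls_subset

lemma mem_componentsOf_nonempty {B C : Finset (Dyad V)} (h : C ∈ componentsOf B) :
    C.Nonempty := by
  rw [componentsOf_eq, Finset.mem_image] at h
  obtain ⟨d, hd, rfl⟩ := h
  exact ⟨d, mem_cls_self hd⟩

lemma mem_componentsOf_conn {B C : Finset (Dyad V)} (h : C ∈ componentsOf B) :
    IsConnEdgeSet (↑C : Set (Dyad V)) := by
  rw [componentsOf_eq, Finset.mem_image] at h
  obtain ⟨d, hd, rfl⟩ := h
  exact cls_conn hd

end Graph3

section Graph4
set_option linter.unusedSectionVars false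
variable {V : Type*} [Fintype V] [DecidableEq V]

lemma cls_supp_disjoint {B : Finset (Dyad V)} {d : Dyad V} :
    Disjoint (dyadSupp (↑(cls B d) : Set (Dyad V)))
      (dyadSupp (↑(B \ cls B d) : Set (Dyad V))) := by
  rw [Set.disjoint_left]
  rintro x hx ⟨e, he, hxe⟩
  have he' : e ∈ B \ cls B d := he
  rw [Finset.mem_sdiff] at he'
  exact he'.2 (cls_closed e he'.1 ⟨x, hxe, hx⟩)

lemma componentsOf_insert_cls {B : Finset (Dyad V)} {d : Dyad V} (hd : d ∈ B) :
    componentsOf B = insert (cls B d) (componentsOf (B \ cls B d)) ∧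
      cls B d ∉ componentsOf (B \ cls B d) := by
  constructor
  · have hU : B = cls B d ∪ (B \ cls B d) := (Finset.union_sdiff_of_subset cls_subset).symm
    calc componentsOf B = componentsOf (cls B d ∪ (B \ cls B d)) := by rw [← hU]
      _ = componentsOf (cls B d) ∪ componentsOf (B \ cls B d) :=
          componentsOf_union cls_supp_disjoint
      _ = insert (cls B d) (componentsOf (B \ cls B d)) := by
          rw [componentsOf_of_conn (cls_conn hd)]
          rw [← Finset.insert_eq]
  · intro h
    have hsub := mem_componentsOf_subset h
    have := hsub (mem_cls_self hd)
    rw [Finset.mem_sdiff] at this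
    exact this.2 (mem_cls_self hd)

lemma dyadPerm_inv {π : Equiv.Perm V} (d : Dyad V) :
    dyadPerm π⁻¹ (dyadPerm π d) = d := by
  apply Subtype.ext
  show Sym2.map (⇑π⁻¹) (Sym2.map (⇑π) d.1) = d.1
  rw [Sym2.map_map]
  have h : (⇑π⁻¹ ∘ ⇑π) = id := by ext x; simp
  rw [h, Sym2.map_id, id]

/-- dyadPerm as an equivalence. -/
def dyadEquiv (π : Equiv.Perm V) : Dyad V ≃ Dyad V where
  toFun := dyadPerm π
  invFun := dyadPerm π⁻¹
  left_inv d := dyadPerm_inv d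
  right_inv d := by simpa using dyadPerm_inv (π := π⁻¹) d

lemma graphOfDyads_image_adj {B : Finset (Dyad V)} {π : Equiv.Perm V} {a b : V} :
    (graphOfDyads (↑(B.image (dyadPerm π)) : Set (Dyad V))).Adj (π a) (π b) ↔
      (graphOfDyads (↑B : Set (Dyad V))).Adj a b := by
  rw [graphOfDyads_adj, graphOfDyads_adj]
  constructor
  · rintro ⟨⟨d', hd', hd1⟩, hne⟩
    have hd'2 : d' ∈ B.image (dyadPerm π) := hd'
    rw [Finset.mem_image] at hd'2
    obtain ⟨d, hd, rfl⟩ := hd'2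
    refine ⟨⟨d, hd, ?_⟩, fun h => hne (by rw [h])⟩
    have : Sym2.map π d.1 = Sym2.map π s(a, b) := by
      rw [Sym2.map_pair_eq]; exact hd1
    exact Sym2.map.injective π.injective this
  · rintro ⟨⟨d, hd, hd1⟩, hne⟩
    refine ⟨⟨dyadPerm π d, Finset.mem_image_of_mem _ hd, ?_⟩, fun h => hne (π.injective h)⟩
    show Sym2.map π d.1 = _
    rw [hd1, Sym2.map_pair_eq]

/-- The graph isomorphism induced by a permutation. -/
def graphIso (B : Finset (Dyad V)) (π : Equiv.Perm V) :
    graphOfDyads (↑B : Set (Dyad V)) ≃g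
      graphOfDyads (↑(B.image (dyadPerm π)) : Set (Dyad V)) :=
  ⟨π, graphOfDyads_image_adj⟩

lemma reach_image {B : Finset (Dyad V)} {π : Equiv.Perm V} {u v : V} :
    (graphOfDyads (↑(B.image (dyadPerm π)) : Set (Dyad V))).Reachable (π u) (π v) ↔
      (graphOfDyads (↑B : Set (Dyad V))).Reachable u v :=
  SimpleGraph.Iso.reachable_iff (φ := graphIso B π)

lemma mem_dyadPerm {π : Equiv.Perm V} {d : Dyad V} {u : V} :
    π u ∈ (dyadPerm π d).1 ↔ u ∈ d.1 := by
  show π u ∈ Sym2.map π d.1 ↔ _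
  rw [Sym2.mem_map]
  constructor
  · rintro ⟨a, ha, hau⟩
    rwa [← π.injective hau]
  · exact fun h => ⟨u, h, rfl⟩

lemma dyadRel_image {B : Finset (Dyad V)} {π : Equiv.Perm V} {d e : Dyad V} :
    dyadRel (B.image (dyadPerm π)) (dyadPerm π d) (dyadPerm π e) ↔ dyadRel B d e := by
  constructor
  · rintro ⟨u, v, hu, hv, hr⟩
    refine ⟨π⁻¹ u, π⁻¹ v, ?_, ?_, ?_⟩
    · rw [← mem_dyadPerm (π := π)]; simpa using hu
    · rw [← mem_dyadPerm (π := π)]; simpa using hv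
    · rw [← reach_image (π := π)]; simpa using hr
  · rintro ⟨u, v, hu, hv, hr⟩
    exact ⟨π u, π v, mem_dyadPerm.2 hu, mem_dyadPerm.2 hv, reach_image.2 hr⟩

lemma cls_image {B : Finset (Dyad V)} {π : Equiv.Perm V} {d : Dyad V} :
    cls (B.image (dyadPerm π)) (dyadPerm π d) = (cls B d).image (dyadPerm π) := by
  ext e'
  constructor
  · intro h
    obtain ⟨he', hrel⟩ := mem_cls.1 h
    rw [Finset.mem_image] at he'
    obtain ⟨e, he, rfl⟩ := he'
    exact Finset.mem_image_of_mem _ (mem_cls.2 ⟨he, dyadRel_image.1 hrel⟩)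
  · intro h
    rw [Finset.mem_image] at h
    obtain ⟨e, he, rfl⟩ := h
    obtain ⟨heB, hrel⟩ := mem_cls.1 he
    exact mem_cls.2 ⟨Finset.mem_image_of_mem _ heB, dyadRel_image.2 hrel⟩

lemma componentsOf_image {B : Finset (Dyad V)} {π : Equiv.Perm V} :
    componentsOf (B.image (dyadPerm π)) =
      (componentsOf B).image (fun C => C.image (dyadPerm π)) := by
  rw [componentsOf_eq, componentsOf_eq, Finset.image_image, Finset.image_image]
  exact Finset.image_congr (fun d _ => cls_image)

end Graph4


section Alg
variable {α : Type*} [Fintype α] [DecidableEq α]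

open Finset

lemma sum_pow_neg_one_real (s : Finset α) :
    ∑ t ∈ s.powerset, (-1 : ℝ) ^ t.card = if s = ∅ then 1 else 0 := by
  have h := Finset.sum_powerset_neg_one_pow_card (α := α) (x := s)
  have h2 : ((∑ m ∈ s.powerset, (-1 : ℤ) ^ m.card : ℤ) : ℝ)
      = ∑ m ∈ s.powerset, (-1 : ℝ) ^ m.card := by push_cast; rfl
  rw [← h2, h]
  by_cases h3 : s = ∅ <;> simp [h3]

lemma alt_sum_pow (s : Finset α) :
    ∑ t ∈ s.powerset, (-1 : ℝ) ^ (s.card - t.card) = if s = ∅ then 1 else 0 := by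
  have : ∀ t ∈ s.powerset, (-1 : ℝ) ^ (s.card - t.card) = (-1) ^ s.card * (-1) ^ t.card := by
    intro t ht
    rw [Finset.mem_powerset] at ht
    have hle : t.card ≤ s.card := Finset.card_le_card ht
    have h1 : (-1 : ℝ) ^ (s.card - t.card) * (-1) ^ t.card = (-1) ^ s.card := by
      rw [← pow_add, Nat.sub_add_cancel hle]
    have h2 : ((-1 : ℝ) ^ t.card) * ((-1) ^ t.card) = 1 := by
      rw [← pow_add, Even.neg_one_pow ⟨t.card, rfl⟩]
    calc (-1 : ℝ) ^ (s.card - t.card)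
        = (-1 : ℝ) ^ (s.card - t.card) * (((-1) ^ t.card) * ((-1) ^ t.card)) := by
          rw [h2, mul_one]
      _ = ((-1 : ℝ) ^ (s.card - t.card) * (-1) ^ t.card) * (-1) ^ t.card := by ring
      _ = (-1) ^ s.card * (-1) ^ t.card := by rw [h1]
  rw [Finset.sum_congr rfl this, ← Finset.mul_sum, sum_pow_neg_one_real]
  by_cases h : s = ∅ <;> simp [h]

lemma alt_sum₁ (A B' : Finset α) :
    ∑ B ∈ Finset.univ.filter (fun B => A ⊆ B ∧ B ⊆ B'), (-1 : ℝ) ^ (B.card - A.card)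
      = if B' = A then 1 else 0 := by
  by_cases hAB : A ⊆ B'
  · have : ∑ B ∈ Finset.univ.filter (fun B => A ⊆ B ∧ B ⊆ B'),
        (-1 : ℝ) ^ (B.card - A.card) = ∑ S ∈ (B' \ A).powerset, (-1 : ℝ) ^ S.card := by
      refine Finset.sum_nbij' (fun B => B \ A) (fun S => A ∪ S) ?_ ?_ ?_ ?_ ?_
      · intro B hB
        rw [Finset.mem_filter] at hB
        rw [Finset.mem_powerset]
        exact Finset.sdiff_subset_sdiff hB.2.2 (le_refl A)
      · intro S hS
        rw [Finset.mem_powerset] at hS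
        rw [Finset.mem_filter]
        refine ⟨Finset.mem_univ _, Finset.subset_union_left, Finset.union_subset hAB ?_⟩
        exact hS.trans (Finset.sdiff_subset)
      · intro B hB
        rw [Finset.mem_filter] at hB
        exact Finset.union_sdiff_of_subset hB.2.1
      · intro S hS
        rw [Finset.mem_powerset] at hS
        show (A ∪ S) \ A = S
        rw [Finset.union_sdiff_cancel_left]
        exact Finset.disjoint_left.2 fun a ha ha' => (Finset.mem_sdiff.1 (hS ha')).2 ha
      · intro B hB
        rw [Finset.mem_filter] at hB
        congr 1
        rw [Finset.card_sdiff_of_subset hB.2.1]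
    rw [this, sum_pow_neg_one_real]
    have : B' \ A = ∅ ↔ B' = A := by
      rw [Finset.sdiff_eq_empty_iff_subset]
      exact ⟨fun h => Finset.Subset.antisymm h hAB, fun h => h.le⟩
    by_cases h : B' = A <;> simp [h, this]
  · have hempty : Finset.univ.filter (fun B => A ⊆ B ∧ B ⊆ B') = ∅ := by
      rw [Finset.filter_eq_empty_iff]
      rintro B _ ⟨h1, h2⟩
      exact hAB (h1.trans h2)
    rw [hempty, Finset.sum_empty]
    have : B' ≠ A := fun h => hAB (h ▸ le_refl _)
    simp [this]

lemma alt_sum₂ (A B' : Finset α) :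
    ∑ B ∈ Finset.univ.filter (fun B => A ⊆ B ∧ B ⊆ B'), (-1 : ℝ) ^ (B'.card - B.card)
      = if B' = A then 1 else 0 := by
  by_cases hAB : A ⊆ B'
  · have : ∑ B ∈ Finset.univ.filter (fun B => A ⊆ B ∧ B ⊆ B'),
        (-1 : ℝ) ^ (B'.card - B.card)
          = ∑ S ∈ (B' \ A).powerset, (-1 : ℝ) ^ ((B' \ A).card - S.card) := by
      refine Finset.sum_nbij' (fun B => B \ A) (fun S => A ∪ S) ?_ ?_ ?_ ?_ ?_
      · intro B hB
        rw [Finset.mem_filter] at hB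
        rw [Finset.mem_powerset]
        exact Finset.sdiff_subset_sdiff hB.2.2 (le_refl A)
      · intro S hS
        rw [Finset.mem_powerset] at hS
        rw [Finset.mem_filter]
        refine ⟨Finset.mem_univ _, Finset.subset_union_left, Finset.union_subset hAB ?_⟩
        exact hS.trans (Finset.sdiff_subset)
      · intro B hB
        rw [Finset.mem_filter] at hB
        exact Finset.union_sdiff_of_subset hB.2.1
      · intro S hS
        rw [Finset.mem_powerset] at hS
        show (A ∪ S) \ A = S
        rw [Finset.union_sdiff_cancel_left]
        exact Finset.disjoint_left.2 fun a ha ha' => (Finset.mem_sdiff.1 (hS ha')).2 ha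
      · intro B hB
        rw [Finset.mem_filter] at hB
        show _ = (-1 : ℝ) ^ ((B' \ A).card - (B \ A).card)
        congr 1
        have e1 := Finset.card_sdiff_of_subset hB.2.1
        have e2 := Finset.card_sdiff_of_subset (hB.2.1.trans hB.2.2)
        have l1 := Finset.card_le_card hB.2.1
        have l2 := Finset.card_le_card hB.2.2
        omega
    rw [this, alt_sum_pow]
    have h2 : B' \ A = ∅ ↔ B' = A := by
      rw [Finset.sdiff_eq_empty_iff_subset]
      exact ⟨fun h => Finset.Subset.antisymm h hAB, fun h => h.le⟩
    by_cases h : B' = A <;> simp [h, h2]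
  · have hempty : Finset.univ.filter (fun B => A ⊆ B ∧ B ⊆ B') = ∅ := by
      rw [Finset.filter_eq_empty_iff]
      rintro B _ ⟨h1, h2⟩
      exact hAB (h1.trans h2)
    rw [hempty, Finset.sum_empty]
    have : B' ≠ A := fun h => hAB (h ▸ le_refl _)
    simp [this]

end Alg

section Alg2
set_option linter.unusedSectionVars false
variable {α : Type*} [Fintype α] [DecidableEq α]

lemma mobius_fwd (p z : Finset α → ℝ)
    (hz : ∀ A, z A = ∑ B ∈ Finset.univ.filter (fun B => A ⊆ B), p B) (A : Finset α) :
    p A = ∑ B ∈ Finset.univ.filter (fun B => A ⊆ B),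
      (-1 : ℝ) ^ (B.card - A.card) * z B := by
  have step : ∑ B ∈ Finset.univ.filter (fun B => A ⊆ B), (-1 : ℝ) ^ (B.card - A.card) * z B
      = ∑ B ∈ Finset.univ, ∑ B' ∈ Finset.univ,
          (if A ⊆ B ∧ B ⊆ B' then (-1 : ℝ) ^ (B.card - A.card) * p B' else 0) := by
    rw [Finset.sum_filter]
    refine Finset.sum_congr rfl fun B _ => ?_
    by_cases hAB : A ⊆ B
    · simp only [hAB, if_true, true_and]
      rw [hz B, Finset.mul_sum, Finset.sum_filter]
    · simp [hAB]
  rw [step, Finset.sum_comm]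
  have step2 : ∀ B' : Finset α, ∑ B ∈ Finset.univ,
      (if A ⊆ B ∧ B ⊆ B' then (-1 : ℝ) ^ (B.card - A.card) * p B' else 0)
      = (if B' = A then 1 else 0) * p B' := by
    intro B'
    rw [← alt_sum₁ A B', Finset.sum_filter, Finset.sum_mul]
    refine Finset.sum_congr rfl fun B _ => ?_
    by_cases h : A ⊆ B ∧ B ⊆ B' <;> simp [h]
  rw [Finset.sum_congr rfl fun B' _ => step2 B']
  simp [Finset.sum_ite_eq, eq_comm]

lemma mobius_inv (p z w : Finset α → ℝ)
    (hz : ∀ A, z A = ∑ B ∈ Finset.univ.filter (fun B => A ⊆ B), p B)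
    (hp : ∀ A, p A = ∑ B ∈ Finset.univ.filter (fun B => A ⊆ B),
      (-1 : ℝ) ^ (B.card - A.card) * w B) (A : Finset α) : z A = w A := by
  have step : z A = ∑ B ∈ Finset.univ, ∑ B' ∈ Finset.univ,
      (if A ⊆ B ∧ B ⊆ B' then (-1 : ℝ) ^ (B'.card - B.card) * w B' else 0) := by
    rw [hz, Finset.sum_filter]
    refine Finset.sum_congr rfl fun B _ => ?_
    by_cases hAB : A ⊆ B
    · simp only [hAB, if_true, true_and]
      rw [hp B, Finset.sum_filter]
    · simp [hAB]
  rw [step, Finset.sum_comm]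
  have step2 : ∀ B' : Finset α, ∑ B ∈ Finset.univ,
      (if A ⊆ B ∧ B ⊆ B' then (-1 : ℝ) ^ (B'.card - B.card) * w B' else 0)
      = (if B' = A then 1 else 0) * w B' := by
    intro B'
    rw [← alt_sum₂ A B', Finset.sum_filter, Finset.sum_mul]
    refine Finset.sum_congr rfl fun B _ => ?_
    by_cases h : A ⊆ B ∧ B ⊆ B' <;> simp [h]
  rw [Finset.sum_congr rfl fun B' _ => step2 B']
  simp [Finset.sum_ite_eq, eq_comm]

lemma ie_alg (p z : Finset α → ℝ)
    (hz : ∀ A, z A = ∑ B ∈ Finset.univ.filter (fun B => A ⊆ B), p B)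
    (T₀ F₀ : Finset α) :
    ∑ A ∈ Finset.univ.filter (fun A => T₀ ⊆ A ∧ F₀ ∩ A = ∅), p A
      = ∑ S ∈ F₀.powerset, (-1 : ℝ) ^ S.card * z (T₀ ∪ S) := by
  have step : ∑ S ∈ F₀.powerset, (-1 : ℝ) ^ S.card * z (T₀ ∪ S)
      = ∑ S ∈ F₀.powerset, ∑ A ∈ Finset.univ,
          (if T₀ ∪ S ⊆ A then (-1 : ℝ) ^ S.card * p A else 0) := by
    refine Finset.sum_congr rfl fun S _ => ?_
    rw [hz, Finset.mul_sum, Finset.sum_filter]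
  rw [step, Finset.sum_comm]
  have step2 : ∀ A : Finset α, ∑ S ∈ F₀.powerset,
      (if T₀ ∪ S ⊆ A then (-1 : ℝ) ^ S.card * p A else 0)
      = (if T₀ ⊆ A ∧ F₀ ∩ A = ∅ then 1 else 0) * p A := by
    intro A
    by_cases hT : T₀ ⊆ A
    · have hiff : ∀ S ∈ F₀.powerset, (T₀ ∪ S ⊆ A ↔ S ⊆ F₀ ∩ A) := by
        intro S hS
        rw [Finset.mem_powerset] at hS
        rw [Finset.union_subset_iff]
        constructor
        · rintro ⟨_, h2⟩
          exact Finset.subset_inter hS h2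
        · intro h
          exact ⟨hT, h.trans Finset.inter_subset_right⟩
      calc ∑ S ∈ F₀.powerset, (if T₀ ∪ S ⊆ A then (-1 : ℝ) ^ S.card * p A else 0)
          = ∑ S ∈ F₀.powerset, (if S ⊆ F₀ ∩ A then (-1 : ℝ) ^ S.card * p A else 0) :=
            Finset.sum_congr rfl fun S hS => by rw [if_congr (hiff S hS) rfl rfl]
        _ = ∑ S ∈ F₀.powerset.filter (fun S => S ⊆ F₀ ∩ A), (-1 : ℝ) ^ S.card * p A :=
            (Finset.sum_filter _ _).symm
        _ = ∑ S ∈ (F₀ ∩ A).powerset, (-1 : ℝ) ^ S.card * p A := by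
            congr 1
            ext S
            simp only [Finset.mem_filter, Finset.mem_powerset]
            exact ⟨fun h => h.2, fun h => ⟨h.trans Finset.inter_subset_left, h⟩⟩
        _ = (∑ S ∈ (F₀ ∩ A).powerset, (-1 : ℝ) ^ S.card) * p A := by
            rw [Finset.sum_mul]
        _ = (if T₀ ⊆ A ∧ F₀ ∩ A = ∅ then 1 else 0) * p A := by
            rw [sum_pow_neg_one_real]
            by_cases h : F₀ ∩ A = ∅ <;> simp [h, hT]
    · have : ∀ S ∈ F₀.powerset, ¬ (T₀ ∪ S ⊆ A) := by
        intro S _ h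
        exact hT (Finset.subset_union_left.trans h)
      rw [Finset.sum_congr rfl fun S hS => if_neg (this S hS)]
      simp [hT]
  rw [Finset.sum_congr rfl fun A _ => step2 A]
  rw [Finset.sum_filter]
  refine Finset.sum_congr rfl fun A _ => ?_
  by_cases h : T₀ ⊆ A ∧ F₀ ∩ A = ∅ <;> simp [h]

end Alg2


section Meas
set_option linter.unusedSectionVars false
variable {V Ω : Type*} [Fintype V] [DecidableEq V] [MeasurableSpace Ω]
  (μ : Measure Ω) (X : Dyad V → Ω → Bool)

/-- The event that `X` agrees with `f` on all dyads in `D₀`. -/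
def Ev (D₀ : Finset (Dyad V)) (f : Dyad V → Bool) : Set Ω :=
  {ω | ∀ d ∈ D₀, X d ω = f d}

lemma measurable_Ev (hmeas : ∀ d : Dyad V, Measurable (X d)) (D₀ : Finset (Dyad V))
    (f : Dyad V → Bool) : MeasurableSet (Ev X D₀ f) := by
  have h : Ev X D₀ f = ⋂ (d : Dyad V) (_ : d ∈ D₀), (X d) ⁻¹' {f d} := by
    ext ω
    simp [Ev, Set.mem_iInter]
  rw [h]
  exact MeasurableSet.iInter fun d => MeasurableSet.iInter fun _ =>
    (hmeas d) (measurableSet_singleton _)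

/-- The event that the configuration of `X` on `D₀` is exactly `T`. -/
def ET (D₀ T : Finset (Dyad V)) : Set Ω := Ev X D₀ (fun d => decide (d ∈ T))

lemma measurable_ET (hmeas : ∀ d : Dyad V, Measurable (X d)) (D₀ T : Finset (Dyad V)) :
    MeasurableSet (ET X D₀ T) := measurable_Ev X hmeas _ _

lemma ET_disjoint {D₀ T T' : Finset (Dyad V)} (hT : T ⊆ D₀) (hT' : T' ⊆ D₀)
    (hne : T ≠ T') : Disjoint (ET X D₀ T) (ET X D₀ T') := by
  have hd : ∃ d, d ∈ D₀ ∧ ¬ (d ∈ T ↔ d ∈ T') := by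
    by_contra hcon
    push_neg at hcon
    apply hne
    ext d
    by_cases hdD : d ∈ D₀
    · exact hcon d hdD
    · exact ⟨fun h => absurd (hT h) hdD, fun h => absurd (hT' h) hdD⟩
  obtain ⟨d, hdD, hdiff⟩ := hd
  rw [Set.disjoint_left]
  intro ω h1 h2
  have e1 : X d ω = decide (d ∈ T) := h1 d hdD
  have e2 : X d ω = decide (d ∈ T') := h2 d hdD
  apply hdiff
  rw [← decide_eq_decide]
  rw [← e1, ← e2]

/-- Decomposition of a partial-configuration event into exact configurations on `D₀`. -/
lemma Ev_eq_biUnion {D' D₀ : Finset (Dyad V)} (hsub : D' ⊆ D₀) (f : Dyad V → Bool) :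
    Ev X D' f = ⋃ T ∈ D₀.powerset.filter
      (fun T => T ∩ D' = D'.filter (fun d => f d = true)), ET X D₀ T := by
  ext ω
  simp only [Set.mem_iUnion, exists_prop, Finset.mem_filter, Finset.mem_powerset]
  constructor
  · intro hω
    refine ⟨D₀.filter (fun d => X d ω = true), ⟨Finset.filter_subset _ _, ?_⟩, ?_⟩
    · ext d
      simp only [Finset.mem_inter, Finset.mem_filter]
      constructor
      · rintro ⟨⟨_, hX⟩, hdD'⟩
        exact ⟨hdD', by rw [← hω d hdD']; exact hX⟩
      · rintro ⟨hdD', hf⟩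
        exact ⟨⟨hsub hdD', by rw [hω d hdD']; exact hf⟩, hdD'⟩
    · intro d hd
      by_cases hX : X d ω = true
      · simp [Finset.mem_filter, hd, hX]
      · rw [Bool.not_eq_true] at hX
        simp [Finset.mem_filter, hd, hX]
  · rintro ⟨T, ⟨hTD₀, hTint⟩, hω⟩ d hd
    have h1 : X d ω = decide (d ∈ T) := hω d (hsub hd)
    have h2 : d ∈ T ↔ f d = true := by
      constructor
      · intro h
        have : d ∈ T ∩ D' := Finset.mem_inter.2 ⟨h, hd⟩
        rw [hTint, Finset.mem_filter] at this
        exact this.2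
      · intro h
        have : d ∈ D'.filter (fun d => f d = true) := Finset.mem_filter.2 ⟨hd, h⟩
        rw [← hTint, Finset.mem_inter] at this
        exact this.1
    rw [h1]
    cases hf : f d
    · rw [hf] at h2
      simp only [decide_eq_false_iff_not]
      intro h
      exact Bool.false_ne_true (h2.1 h)
    · rw [hf] at h2
      simp [h2.2 rfl]

lemma measure_Ev_decomp (hmeas : ∀ d : Dyad V, Measurable (X d))
    {D' D₀ : Finset (Dyad V)} (hsub : D' ⊆ D₀) (f : Dyad V → Bool) :
    μ (Ev X D' f) = ∑ T ∈ D₀.powerset.filter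
      (fun T => T ∩ D' = D'.filter (fun d => f d = true)), μ (ET X D₀ T) := by
  rw [Ev_eq_biUnion X hsub f]
  refine measure_biUnion_finset ?_ (fun T _ => measurable_ET X hmeas D₀ T)
  intro T hT T' hT' hne
  simp only [Finset.coe_filter, Set.mem_setOf_eq, Finset.mem_powerset] at hT hT'
  exact ET_disjoint X hT.1 hT'.1 hne

end Meas

section Prob
set_option linter.unusedSectionVars false
variable {V Ω : Type*} [Fintype V] [DecidableEq V] [MeasurableSpace Ω]
  (μ : Measure Ω) [IsProbabilityMeasure μ] (X : Dyad V → Ω → Bool)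

/-- exact-configuration probability -/
noncomputable def prR (A : Finset (Dyad V)) : ℝ := (μ (ET X Finset.univ A)).toReal

lemma bool_eq_decide {b : Bool} {p : Prop} [Decidable p] : b = decide p ↔ (b = true ↔ p) := by
  cases b <;> simp

lemma exact_event_eq (A : Finset (Dyad V)) :
    {ω | ∀ d : Dyad V, X d ω = true ↔ d ∈ A} = ET X Finset.univ A := by
  ext ω
  simp only [Set.mem_setOf_eq, ET, Ev, Finset.mem_univ, forall_true_left]
  constructor
  · intro h d
    exact bool_eq_decide.2 (h d)
  · intro h d
    exact bool_eq_decide.1 (h d)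

lemma zParam_eq_Ev (B : Finset (Dyad V)) :
    zParam μ X B = (μ (Ev X B (fun _ => true))).toReal := rfl

lemma zParam_sum_prR (hmeas : ∀ d : Dyad V, Measurable (X d)) (A : Finset (Dyad V)) :
    zParam μ X A = ∑ B ∈ Finset.univ.filter (fun B => A ⊆ B), prR μ X B := by
  rw [zParam_eq_Ev, measure_Ev_decomp μ X hmeas (Finset.subset_univ A) (fun _ => true)]
  have hidx : Finset.univ.powerset.filter
      (fun T => T ∩ A = A.filter (fun d => (fun _ : Dyad V => true) d = true))
      = Finset.univ.filter (fun B => A ⊆ B) := by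
    ext T
    simp [Finset.inter_eq_right]
  rw [hidx, ENNReal.toReal_sum (fun B _ => measure_ne_top μ _)]
  rfl

lemma zParam_empty : zParam μ X (∅ : Finset (Dyad V)) = 1 := by
  have h : {ω : Ω | ∀ d ∈ (∅ : Finset (Dyad V)), X d ω = true} = Set.univ := by
    ext ω; simp
  rw [zParam, h, measure_univ, ENNReal.toReal_one]

/-- Under exchangeability, exact probabilities are invariant under permutations. -/
lemma prR_perm_of_exch (hex : IsExchangeable μ X) (π : Equiv.Perm V) (A : Finset (Dyad V)) :
    prR μ X (A.image (dyadPerm π)) = prR μ X A := by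
  have key := hex π (fun d => decide (d ∈ A))
  have hset : {ω | ∀ d : Dyad V, X (dyadPerm π d) ω = decide (d ∈ A)}
      = ET X Finset.univ (A.image (dyadPerm π)) := by
    ext ω
    simp only [Set.mem_setOf_eq, ET, Ev, Finset.mem_univ, forall_true_left]
    constructor
    · intro h e
      have := h ((dyadEquiv π).symm e)
      have he : dyadPerm π ((dyadEquiv π).symm e) = e := (dyadEquiv π).apply_symm_apply e
      rw [he] at this
      rw [this]
      congr 1
      rw [eq_iff_iff]
      constructor
      · intro hm
        rw [← he]
        exact Finset.mem_image_of_mem _ hm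
      · intro hm
        rw [Finset.mem_image] at hm
        obtain ⟨a, ha, hae⟩ := hm
        have : a = (dyadEquiv π).symm e := by
          apply (dyadEquiv π).injective
          rw [(dyadEquiv π).apply_symm_apply]
          exact hae
        rwa [← this]
    · intro h d
      rw [h (dyadPerm π d)]
      congr 1
      rw [eq_iff_iff]
      constructor
      · intro hm
        rw [Finset.mem_image] at hm
        obtain ⟨a, ha, hae⟩ := hm
        rwa [← (dyadEquiv π).injective hae]
      · exact fun hm => Finset.mem_image_of_mem _ hm
  have hset2 : {ω | ∀ d : Dyad V, X d ω = decide (d ∈ A)} = ET X Finset.univ A := by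
    ext ω
    simp [ET, Ev]
  rw [hset, hset2] at key
  unfold prR
  rw [key]

/-- Under exchangeability, `zParam` is invariant under permutations. -/
lemma zParam_perm_of_exch (hmeas : ∀ d : Dyad V, Measurable (X d))
    (hex : IsExchangeable μ X) (π : Equiv.Perm V) (C : Finset (Dyad V)) :
    zParam μ X (C.image (dyadPerm π)) = zParam μ X C := by
  rw [zParam_sum_prR μ X hmeas, zParam_sum_prR μ X hmeas]
  refine Finset.sum_nbij' (fun B => B.image (dyadPerm π⁻¹)) (fun B => B.image (dyadPerm π))
    ?_ ?_ ?_ ?_ ?_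
  · intro B hB
    rw [Finset.mem_filter] at hB ⊢
    refine ⟨Finset.mem_univ _, ?_⟩
    intro d hd
    have : dyadPerm π d ∈ C.image (dyadPerm π) := Finset.mem_image_of_mem _ hd
    have h2 := hB.2 this
    have h3 : dyadPerm π⁻¹ (dyadPerm π d) = d := dyadPerm_inv d
    rw [Finset.mem_image]
    exact ⟨dyadPerm π d, h2, h3⟩
  · intro B hB
    rw [Finset.mem_filter] at hB ⊢
    refine ⟨Finset.mem_univ _, ?_⟩
    intro e he
    rw [Finset.mem_image] at he
    obtain ⟨c, hc, rfl⟩ := he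
    exact Finset.mem_image_of_mem _ (hB.2 hc)
  · intro B _
    show (B.image (dyadPerm π⁻¹)).image (dyadPerm π) = B
    rw [Finset.image_image]
    have : (dyadPerm (V := V) π ∘ dyadPerm π⁻¹) = id := by
      funext d
      simp only [Function.comp_apply, id_eq]
      have := dyadPerm_inv (π := π⁻¹) d
      rwa [inv_inv] at this
    rw [this, Finset.image_id]
  · intro B _
    show (B.image (dyadPerm π)).image (dyadPerm π⁻¹) = B
    rw [Finset.image_image]
    have : (dyadPerm (V := V) π⁻¹ ∘ dyadPerm π) = id := by
      funext d
      simp only [Function.comp_apply, id_eq]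
      exact dyadPerm_inv d
    rw [this, Finset.image_id]
  · intro B hB
    have : B = (B.image (dyadPerm π⁻¹)).image (dyadPerm π) := by
      rw [Finset.image_image]
      have h : (dyadPerm (V := V) π ∘ dyadPerm π⁻¹) = id := by
        funext d
        simp only [Function.comp_apply, id_eq]
        have := dyadPerm_inv (π := π⁻¹) d
        rwa [inv_inv] at this
      rw [h, Finset.image_id]
    conv_lhs => rw [this]
    rw [prR_perm_of_exch μ X hex]

end Prob

section Prob2
set_option linter.unusedSectionVars false
open Finset
variable {V Ω : Type*} [Fintype V] [DecidableEq V] [MeasurableSpace Ω]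
  (μ : Measure Ω) [IsProbabilityMeasure μ] (X : Dyad V → Ω → Bool)

lemma dissoc_split (hmeas : ∀ d : Dyad V, Measurable (X d)) (hdiss : IsDissociated μ X)
    {B₁ B₂ : Finset (Dyad V)}
    (hsupp : Disjoint (dyadSupp (↑B₁ : Set (Dyad V))) (dyadSupp (↑B₂ : Set (Dyad V)))) :
    zParam μ X (B₁ ∪ B₂) = zParam μ X B₁ * zParam μ X B₂ := by
  classical
  set N₁ := dyadSupp (↑B₁ : Set (Dyad V)) with hN₁
  set N₂ := dyadSupp (↑B₂ : Set (Dyad V)) with hN₂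
  set D₁ : Finset (Dyad V) := Finset.univ.filter (fun d => dyadIn d N₁) with hD₁
  set D₂ : Finset (Dyad V) := Finset.univ.filter (fun d => dyadIn d N₂) with hD₂
  have hB₁D₁ : B₁ ⊆ D₁ := by
    intro d hd
    rw [hD₁, Finset.mem_filter]
    exact ⟨Finset.mem_univ _, fun v hv => ⟨d, Finset.mem_coe.2 hd, hv⟩⟩
  have hB₂D₂ : B₂ ⊆ D₂ := by
    intro d hd
    rw [hD₂, Finset.mem_filter]
    exact ⟨Finset.mem_univ _, fun v hv => ⟨d, Finset.mem_coe.2 hd, hv⟩⟩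
  have hET₁ : ∀ T : Finset (Dyad V), ET X D₁ T
      = {ω | ∀ d : Dyad V, dyadIn d N₁ → X d ω = (fun d => decide (d ∈ T)) d} := by
    intro T
    ext ω
    simp only [ET, Ev, Set.mem_setOf_eq]
    constructor
    · intro h d hd
      exact h d (Finset.mem_filter.2 ⟨Finset.mem_univ _, hd⟩)
    · intro h d hd
      exact h d (Finset.mem_filter.1 hd).2
  have hET₂ : ∀ T : Finset (Dyad V), ET X D₂ T
      = {ω | ∀ d : Dyad V, dyadIn d N₂ → X d ω = (fun d => decide (d ∈ T)) d} := by
    intro T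
    ext ω
    simp only [ET, Ev, Set.mem_setOf_eq]
    constructor
    · intro h d hd
      exact h d (Finset.mem_filter.2 ⟨Finset.mem_univ _, hd⟩)
    · intro h d hd
      exact h d (Finset.mem_filter.1 hd).2
  set S₁ := D₁.powerset.filter
    (fun T => T ∩ B₁ = B₁.filter (fun d => (fun _ : Dyad V => true) d = true)) with hS₁
  set S₂ := D₂.powerset.filter
    (fun T => T ∩ B₂ = B₂.filter (fun d => (fun _ : Dyad V => true) d = true)) with hS₂
  have hEvset : Ev X (B₁ ∪ B₂) (fun _ => true)
      = Ev X B₁ (fun _ => true) ∩ Ev X B₂ (fun _ => true) := by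
    ext ω
    simp only [Ev, Set.mem_setOf_eq, Set.mem_inter_iff, Finset.forall_mem_union]
  have hun : Ev X B₁ (fun _ => true) ∩ Ev X B₂ (fun _ => true)
      = ⋃ p ∈ S₁ ×ˢ S₂, (ET X D₁ p.1 ∩ ET X D₂ p.2) := by
    rw [Ev_eq_biUnion X hB₁D₁, Ev_eq_biUnion X hB₂D₂]
    ext ω
    simp only [Set.mem_inter_iff, Set.mem_iUnion, exists_prop, Finset.mem_product]
    constructor
    · rintro ⟨⟨T₁, h1, hω1⟩, ⟨T₂, h2, hω2⟩⟩
      exact ⟨(T₁, T₂), ⟨h1, h2⟩, hω1, hω2⟩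
    · rintro ⟨⟨T₁, T₂⟩, ⟨h1, h2⟩, hω1, hω2⟩
      exact ⟨⟨T₁, h1, hω1⟩, ⟨T₂, h2, hω2⟩⟩
  have hmes : ∀ p : Finset (Dyad V) × Finset (Dyad V), p ∈ S₁ ×ˢ S₂ →
      MeasurableSet (ET X D₁ p.1 ∩ ET X D₂ p.2) :=
    fun p _ => (measurable_ET X hmeas _ _).inter (measurable_ET X hmeas _ _)
  have hdisj : Set.PairwiseDisjoint (↑(S₁ ×ˢ S₂))
      (fun p : Finset (Dyad V) × Finset (Dyad V) => ET X D₁ p.1 ∩ ET X D₂ p.2) := by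
    intro p hp q hq hne
    simp only [Finset.coe_product, Set.mem_prod, Finset.mem_coe, hS₁, hS₂,
      Finset.mem_filter, Finset.mem_powerset] at hp hq
    by_cases h1 : p.1 = q.1
    · have h2 : p.2 ≠ q.2 := fun h2 => hne (Prod.ext h1 h2)
      exact Disjoint.mono Set.inter_subset_right Set.inter_subset_right
        (ET_disjoint X hp.2.1 hq.2.1 h2)
    · exact Disjoint.mono Set.inter_subset_left Set.inter_subset_left
        (ET_disjoint X hp.1.1 hq.1.1 h1)
  have hmain : μ (Ev X (B₁ ∪ B₂) (fun _ => true))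
      = μ (Ev X B₁ (fun _ => true)) * μ (Ev X B₂ (fun _ => true)) := by
    rw [hEvset, hun, measure_biUnion_finset hdisj hmes]
    have hterm : ∀ p ∈ S₁ ×ˢ S₂, μ (ET X D₁ p.1 ∩ ET X D₂ p.2)
        = μ (ET X D₁ p.1) * μ (ET X D₂ p.2) := by
      intro p _
      rw [hET₁ p.1, hET₂ p.2]
      exact hdiss N₁ N₂ hsupp _ _
    rw [Finset.sum_congr rfl hterm]
    rw [measure_Ev_decomp μ X hmeas hB₁D₁ (fun _ => true),
      measure_Ev_decomp μ X hmeas hB₂D₂ (fun _ => true), ← hS₁, ← hS₂,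
      Finset.sum_mul_sum]
    rw [Finset.sum_product]
  have hz : zParam μ X (B₁ ∪ B₂) = (μ (Ev X (B₁ ∪ B₂) (fun _ => true))).toReal := rfl
  rw [hz, hmain, ENNReal.toReal_mul]
  rfl

lemma zParam_mult_of_dissoc (hmeas : ∀ d : Dyad V, Measurable (X d))
    (hdiss : IsDissociated μ X) (B : Finset (Dyad V)) :
    zParam μ X B = ∏ C ∈ componentsOf B, zParam μ X C := by
  induction B using Finset.strongInduction with
  | _ B ih =>
    by_cases hB : B = ∅
    · subst hB
      rw [componentsOf_empty, Finset.prod_empty, zParam_empty]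
    · obtain ⟨d, hd⟩ := Finset.nonempty_iff_ne_empty.2 hB
      obtain ⟨hins, hnot⟩ := componentsOf_insert_cls hd
      have hsplit' : B = cls B d ∪ (B \ cls B d) :=
        (Finset.union_sdiff_of_subset cls_subset).symm
      have hssub : B \ cls B d ⊂ B :=
        Finset.sdiff_ssubset cls_subset ⟨d, mem_cls_self hd⟩
      calc zParam μ X B = zParam μ X (cls B d ∪ (B \ cls B d)) := by rw [← hsplit']
        _ = zParam μ X (cls B d) * zParam μ X (B \ cls B d) :=
            dissoc_split μ X hmeas hdiss cls_supp_disjoint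
        _ = zParam μ X (cls B d) * ∏ C ∈ componentsOf (B \ cls B d), zParam μ X C := by
            rw [ih _ hssub]
        _ = ∏ C ∈ insert (cls B d) (componentsOf (B \ cls B d)), zParam μ X C :=
            (Finset.prod_insert hnot).symm
        _ = ∏ C ∈ componentsOf B, zParam μ X C := by rw [← hins]

lemma zParam_split_of_mult
    (hmult : ∀ A : Finset (Dyad V), zParam μ X A = ∏ C ∈ componentsOf A, zParam μ X C)
    {B₁ B₂ : Finset (Dyad V)}
    (hsupp : Disjoint (dyadSupp (↑B₁ : Set (Dyad V))) (dyadSupp (↑B₂ : Set (Dyad V)))) :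
    zParam μ X (B₁ ∪ B₂) = zParam μ X B₁ * zParam μ X B₂ := by
  have hdisjC : Disjoint (componentsOf B₁) (componentsOf B₂) := by
    rw [Finset.disjoint_left]
    intro C hC1 hC2
    obtain ⟨e, he⟩ := mem_componentsOf_nonempty hC1
    have he1 := mem_componentsOf_subset hC1 he
    have he2 := mem_componentsOf_subset hC2 he
    have hv1 : (e.1.out.1 : V) ∈ dyadSupp (↑B₁ : Set (Dyad V)) :=
      ⟨e, Finset.mem_coe.2 he1, Sym2.out_fst_mem _⟩
    have hv2 : (e.1.out.1 : V) ∈ dyadSupp (↑B₂ : Set (Dyad V)) :=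
      ⟨e, Finset.mem_coe.2 he2, Sym2.out_fst_mem _⟩
    exact Set.disjoint_left.1 hsupp hv1 hv2
  rw [hmult, hmult, hmult, componentsOf_union hsupp, Finset.prod_union hdisjC]

lemma Ev_toReal (hmeas : ∀ d : Dyad V, Measurable (X d)) (D₀ : Finset (Dyad V))
    (h : Dyad V → Bool) :
    (μ (Ev X D₀ h)).toReal = ∑ S ∈ (D₀.filter (fun d => h d = false)).powerset,
      (-1 : ℝ) ^ S.card * zParam μ X ((D₀.filter (fun d => h d = true)) ∪ S) := by
  set T₀ := D₀.filter (fun d => h d = true) with hT₀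
  set F₀ := D₀.filter (fun d => h d = false) with hF₀
  have hidx : Finset.univ.powerset.filter (fun T => T ∩ D₀ = T₀)
      = Finset.univ.filter (fun A => T₀ ⊆ A ∧ F₀ ∩ A = ∅) := by
    ext T
    simp only [Finset.mem_filter, Finset.mem_powerset, Finset.mem_univ, true_and,
      Finset.subset_univ]
    constructor
    · intro hT
      constructor
      · rw [← hT]
        exact Finset.inter_subset_left
      · ext a
        simp only [Finset.mem_inter, Finset.notMem_empty, iff_false, not_and]
        intro haF haT
        rw [hF₀, Finset.mem_filter] at haF
        have : a ∈ T ∩ D₀ := Finset.mem_inter.2 ⟨haT, haF.1⟩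
        rw [hT, hT₀, Finset.mem_filter] at this
        rw [this.2] at haF
        exact absurd haF.2 (by simp)
    · rintro ⟨h1, h2⟩
      ext a
      simp only [Finset.mem_inter]
      constructor
      · rintro ⟨haT, haD⟩
        cases hval : h a
        · exfalso
          have haF : a ∈ F₀ := by rw [hF₀, Finset.mem_filter]; exact ⟨haD, hval⟩
          have : a ∈ F₀ ∩ T := Finset.mem_inter.2 ⟨haF, haT⟩
          rw [h2] at this
          exact Finset.notMem_empty a this
        · rw [hT₀, Finset.mem_filter]
          exact ⟨haD, hval⟩
      · intro haT₀
        refine ⟨h1 haT₀, ?_⟩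
        rw [hT₀, Finset.mem_filter] at haT₀
        exact haT₀.1
  rw [measure_Ev_decomp μ X hmeas (Finset.subset_univ D₀) h, ← hT₀, hidx,
    ENNReal.toReal_sum (fun B _ => measure_ne_top μ _)]
  exact ie_alg (prR μ X) (zParam μ X) (zParam_sum_prR μ X hmeas) T₀ F₀

end Prob2

section Prob3
set_option linter.unusedSectionVars false
open Finset
variable {V Ω : Type*} [Fintype V] [DecidableEq V] [MeasurableSpace Ω]
  (μ : Measure Ω) [IsProbabilityMeasure μ] (X : Dyad V → Ω → Bool)

lemma dyadPerm_injective (π : Equiv.Perm V) : Function.Injective (dyadPerm (V := V) π) :=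
  fun a b hab => by
    have h1 := dyadPerm_inv (π := π) a
    have h2 := dyadPerm_inv (π := π) b
    rw [← h1, ← h2, hab]

lemma conn_image {C B : Finset (Dyad V)} {π : Equiv.Perm V} (hC : C ∈ componentsOf B) :
    C.image (dyadPerm π) ∈ componentsOf (B.image (dyadPerm π)) := by
  rw [componentsOf_image]
  exact Finset.mem_image_of_mem _ hC

lemma image_image_inv (π : Equiv.Perm V) (C : Finset (Dyad V)) :
    (C.image (dyadPerm π)).image (dyadPerm π⁻¹) = C := by
  rw [Finset.image_image]
  have : (dyadPerm (V := V) π⁻¹ ∘ dyadPerm π) = id := by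
    funext d
    exact dyadPerm_inv d
  rw [this, Finset.image_id]

lemma image_inv_image (π : Equiv.Perm V) (C : Finset (Dyad V)) :
    (C.image (dyadPerm π⁻¹)).image (dyadPerm π) = C := by
  have := image_image_inv π⁻¹ C
  rwa [inv_inv] at this

lemma prod_z_image
    (hzinv : ∀ C C' : Finset (Dyad V),
      IsConnEdgeSet (↑C : Set (Dyad V)) → IsConnEdgeSet (↑C' : Set (Dyad V)) →
      (∃ π : Equiv.Perm V, C.image (dyadPerm π) = C') →
      zParam μ X C = zParam μ X C')
    (π : Equiv.Perm V) (B₀ : Finset (Dyad V)) :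
    ∏ C ∈ componentsOf (B₀.image (dyadPerm π)), zParam μ X C
      = ∏ C ∈ componentsOf B₀, zParam μ X C := by
  rw [componentsOf_image, Finset.prod_image
    (fun C _ C' _ h => Finset.image_injective (dyadPerm_injective π) h)]
  refine Finset.prod_congr rfl fun C hC => ?_
  exact hzinv _ _ (mem_componentsOf_conn (conn_image hC)) (mem_componentsOf_conn hC)
    ⟨π⁻¹, image_image_inv π C⟩

lemma prR_inv_of_formula (hmeas : ∀ d : Dyad V, Measurable (X d))
    (hzinv : ∀ C C' : Finset (Dyad V),
      IsConnEdgeSet (↑C : Set (Dyad V)) → IsConnEdgeSet (↑C' : Set (Dyad V)) →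
      (∃ π : Equiv.Perm V, C.image (dyadPerm π) = C') →
      zParam μ X C = zParam μ X C')
    (hform : ∀ A : Finset (Dyad V), prR μ X A
      = ∑ B ∈ Finset.univ.filter (fun B => A ⊆ B),
          (-1 : ℝ) ^ (B.card - A.card) * ∏ C ∈ componentsOf B, zParam μ X C)
    (π : Equiv.Perm V) (A : Finset (Dyad V)) :
    prR μ X (A.image (dyadPerm π)) = prR μ X A := by
  rw [hform, hform]
  refine Finset.sum_nbij' (fun B => B.image (dyadPerm π⁻¹)) (fun B => B.image (dyadPerm π))
    ?_ ?_ ?_ ?_ ?_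
  · intro B hB
    rw [Finset.mem_filter] at hB ⊢
    refine ⟨Finset.mem_univ _, ?_⟩
    intro d hd
    have h2 := hB.2 (Finset.mem_image_of_mem _ hd)
    have h3 : dyadPerm π⁻¹ (dyadPerm π d) = d := dyadPerm_inv d
    rw [Finset.mem_image]
    exact ⟨dyadPerm π d, h2, h3⟩
  · intro B hB
    rw [Finset.mem_filter] at hB ⊢
    refine ⟨Finset.mem_univ _, ?_⟩
    intro e he
    rw [Finset.mem_image] at he
    obtain ⟨c, hc, rfl⟩ := he
    exact Finset.mem_image_of_mem _ (hB.2 hc)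
  · intro B _
    exact image_inv_image π B
  · intro B _
    exact image_image_inv π B
  · intro B hB
    rw [Finset.mem_filter] at hB
    have hcard1 : (B.image (dyadPerm π⁻¹)).card = B.card :=
      Finset.card_image_of_injective _ (dyadPerm_injective π⁻¹)
    have hcard2 : (A.image (dyadPerm π)).card = A.card :=
      Finset.card_image_of_injective _ (dyadPerm_injective π)
    have hprod : ∏ C ∈ componentsOf B, zParam μ X C
        = ∏ C ∈ componentsOf (B.image (dyadPerm π⁻¹)), zParam μ X C := by
      conv_lhs => rw [← image_inv_image π B]
      exact prod_z_image μ X hzinv π (B.image (dyadPerm π⁻¹))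
    rw [hcard1, hcard2, hprod]

lemma exch_of_prR_inv (hmeas : ∀ d : Dyad V, Measurable (X d))
    (hinv : ∀ (π : Equiv.Perm V) (A : Finset (Dyad V)),
      prR μ X (A.image (dyadPerm π)) = prR μ X A) : IsExchangeable μ X := by
  intro π f
  have hdec : ∀ (g : Dyad V → Bool) (d : Dyad V),
      decide (d ∈ Finset.univ.filter (fun e => g e = true)) = g d := by
    intro g d
    cases hg : g d
    · simp [Finset.mem_filter, hg]
    · simp [Finset.mem_filter, hg]
  have hR : {ω | ∀ d : Dyad V, X d ω = f d}
      = ET X Finset.univ (Finset.univ.filter (fun d => f d = true)) := by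
    ext ω
    simp only [Set.mem_setOf_eq, ET, Ev, Finset.mem_univ, forall_true_left]
    constructor
    · intro h d
      rw [h d, hdec f d]
    · intro h d
      rw [h d, hdec f d]
  have hL : {ω | ∀ d : Dyad V, X (dyadPerm π d) ω = f d}
      = ET X Finset.univ ((Finset.univ.filter (fun d => f d = true)).image (dyadPerm π)) := by
    ext ω
    simp only [Set.mem_setOf_eq, ET, Ev, Finset.mem_univ, forall_true_left]
    constructor
    · intro h e
      have h1 := h ((dyadEquiv π).symm e)
      have he : dyadPerm π ((dyadEquiv π).symm e) = e := (dyadEquiv π).apply_symm_apply e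
      rw [he] at h1
      rw [h1]
      have : e ∈ (Finset.univ.filter (fun d => f d = true)).image (dyadPerm π)
          ↔ f ((dyadEquiv π).symm e) = true := by
        rw [Finset.mem_image]
        constructor
        · rintro ⟨a, ha, hae⟩
          have : a = (dyadEquiv π).symm e := by
            apply (dyadEquiv π).injective
            rw [(dyadEquiv π).apply_symm_apply]
            exact hae
          rw [← this]
          exact (Finset.mem_filter.1 ha).2
        · intro hm
          exact ⟨(dyadEquiv π).symm e,
            Finset.mem_filter.2 ⟨Finset.mem_univ _, hm⟩, he⟩
      exact bool_eq_decide.2 this.symm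
    · intro h d
      have h1 := h (dyadPerm π d)
      rw [h1]
      have : dyadPerm π d ∈ (Finset.univ.filter (fun e => f e = true)).image (dyadPerm π)
          ↔ f d = true := by
        rw [Finset.mem_image]
        constructor
        · rintro ⟨a, ha, hae⟩
          rw [← dyadPerm_injective π hae]
          exact (Finset.mem_filter.1 ha).2
        · intro hm
          exact ⟨d, Finset.mem_filter.2 ⟨Finset.mem_univ _, hm⟩, rfl⟩
      exact (bool_eq_decide.2 this.symm).symm
  rw [hL, hR]
  have := hinv π (Finset.univ.filter (fun d => f d = true))
  unfold prR at this
  exact (ENNReal.toReal_eq_toReal_iff' (measure_ne_top μ _) (measure_ne_top μ _)).1 this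

end Prob3

section Prob4
set_option linter.unusedSectionVars false
open Finset
variable {V Ω : Type*} [Fintype V] [DecidableEq V] [MeasurableSpace Ω]
  (μ : Measure Ω) [IsProbabilityMeasure μ] (X : Dyad V → Ω → Bool)

lemma dissoc_of_mult (hmeas : ∀ d : Dyad V, Measurable (X d))
    (hmult : ∀ A : Finset (Dyad V), zParam μ X A = ∏ C ∈ componentsOf A, zParam μ X C) :
    IsDissociated μ X := by
  intro N₁ N₂ hdisj f g
  classical
  set D₁ : Finset (Dyad V) := Finset.univ.filter (fun d => dyadIn d N₁) with hD₁
  set D₂ : Finset (Dyad V) := Finset.univ.filter (fun d => dyadIn d N₂) with hD₂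
  have hmemD₁ : ∀ d : Dyad V, d ∈ D₁ ↔ dyadIn d N₁ := by
    intro d; rw [hD₁, Finset.mem_filter]; simp
  have hmemD₂ : ∀ d : Dyad V, d ∈ D₂ ↔ dyadIn d N₂ := by
    intro d; rw [hD₂, Finset.mem_filter]; simp
  have hE₁ : {ω | ∀ d : Dyad V, dyadIn d N₁ → X d ω = f d} = Ev X D₁ f := by
    ext ω
    simp only [Set.mem_setOf_eq, Ev]
    exact ⟨fun h d hd => h d ((hmemD₁ d).1 hd), fun h d hd => h d ((hmemD₁ d).2 hd)⟩
  have hE₂ : {ω | ∀ d : Dyad V, dyadIn d N₂ → X d ω = g d} = Ev X D₂ g := by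
    ext ω
    simp only [Set.mem_setOf_eq, Ev]
    exact ⟨fun h d hd => h d ((hmemD₂ d).1 hd), fun h d hd => h d ((hmemD₂ d).2 hd)⟩
  have hDdisj : Disjoint D₁ D₂ := by
    rw [Finset.disjoint_left]
    intro d hd1 hd2
    have h1 : (d.1.out.1 : V) ∈ N₁ := (hmemD₁ d).1 hd1 _ (Sym2.out_fst_mem _)
    have h2 : (d.1.out.1 : V) ∈ N₂ := (hmemD₂ d).1 hd2 _ (Sym2.out_fst_mem _)
    exact Set.disjoint_left.1 hdisj h1 h2
  set h : Dyad V → Bool := fun d => if d ∈ D₁ then f d else g d with hh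
  have hInter : Ev X D₁ f ∩ Ev X D₂ g = Ev X (D₁ ∪ D₂) h := by
    ext ω
    simp only [Ev, Set.mem_inter_iff, Set.mem_setOf_eq, Finset.forall_mem_union]
    constructor
    · rintro ⟨h1, h2⟩
      constructor
      · intro d hd
        simp only [hh]
        rw [if_pos hd]
        exact h1 d hd
      · intro d hd
        simp only [hh]
        rw [if_neg (Finset.disjoint_right.1 hDdisj hd)]
        exact h2 d hd
    · rintro ⟨h1, h2⟩
      constructor
      · intro d hd
        have := h1 d hd
        simp only [hh] at this
        rwa [if_pos hd] at this
      · intro d hd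
        have := h2 d hd
        simp only [hh] at this
        rwa [if_neg (Finset.disjoint_right.1 hDdisj hd)] at this
  set T₁ := D₁.filter (fun d => f d = true) with hT₁
  set F₁ := D₁.filter (fun d => f d = false) with hF₁
  set T₂ := D₂.filter (fun d => g d = true) with hT₂
  set F₂ := D₂.filter (fun d => g d = false) with hF₂
  have hTun : (D₁ ∪ D₂).filter (fun d => h d = true) = T₁ ∪ T₂ := by
    ext d
    simp only [Finset.mem_filter, Finset.mem_union, hT₁, hT₂]
    constructor
    · rintro ⟨hd12, hht⟩
      by_cases hd1 : d ∈ D₁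
      · left
        simp only [hh] at hht
        rw [if_pos hd1] at hht
        exact ⟨hd1, hht⟩
      · right
        rcases hd12 with hd1' | hd2
        · exact absurd hd1' hd1
        · simp only [hh] at hht
          rw [if_neg hd1] at hht
          exact ⟨hd2, hht⟩
    · rintro (⟨hd, hft⟩ | ⟨hd, hgt⟩)
      · exact ⟨Or.inl hd, by simp only [hh]; rw [if_pos hd]; exact hft⟩
      · have hd1 : d ∉ D₁ := Finset.disjoint_right.1 hDdisj hd
        exact ⟨Or.inr hd, by simp only [hh]; rw [if_neg hd1]; exact hgt⟩
  have hFun : (D₁ ∪ D₂).filter (fun d => h d = false) = F₁ ∪ F₂ := by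
    ext d
    simp only [Finset.mem_filter, Finset.mem_union, hF₁, hF₂]
    constructor
    · rintro ⟨hd12, hht⟩
      by_cases hd1 : d ∈ D₁
      · left
        simp only [hh] at hht
        rw [if_pos hd1] at hht
        exact ⟨hd1, hht⟩
      · right
        rcases hd12 with hd1' | hd2
        · exact absurd hd1' hd1
        · simp only [hh] at hht
          rw [if_neg hd1] at hht
          exact ⟨hd2, hht⟩
    · rintro (⟨hd, hft⟩ | ⟨hd, hgt⟩)
      · exact ⟨Or.inl hd, by simp only [hh]; rw [if_pos hd]; exact hft⟩
      · have hd1 : d ∉ D₁ := Finset.disjoint_right.1 hDdisj hd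
        exact ⟨Or.inr hd, by simp only [hh]; rw [if_neg hd1]; exact hgt⟩
  have hF₁F₂ : Disjoint F₁ F₂ :=
    Finset.disjoint_of_subset_left (Finset.filter_subset _ _)
      (Finset.disjoint_of_subset_right (Finset.filter_subset _ _) hDdisj)
  -- support bounds
  have hsuppD₁ : ∀ S : Finset (Dyad V), S ⊆ D₁ → dyadSupp (↑S : Set (Dyad V)) ⊆ N₁ := by
    rintro S hS x ⟨e, he, hxe⟩
    exact (hmemD₁ e).1 (hS he) x hxe
  have hsuppD₂ : ∀ S : Finset (Dyad V), S ⊆ D₂ → dyadSupp (↑S : Set (Dyad V)) ⊆ N₂ := by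
    rintro S hS x ⟨e, he, hxe⟩
    exact (hmemD₂ e).1 (hS he) x hxe
  -- real-valued computation
  have hreal : (μ (Ev X (D₁ ∪ D₂) h)).toReal
      = (μ (Ev X D₁ f)).toReal * (μ (Ev X D₂ g)).toReal := by
    rw [Ev_toReal μ X hmeas (D₁ ∪ D₂) h, hTun, hFun,
      Ev_toReal μ X hmeas D₁ f, Ev_toReal μ X hmeas D₂ g, ← hT₁, ← hF₁, ← hT₂, ← hF₂]
    have hstep : ∑ S ∈ (F₁ ∪ F₂).powerset, (-1 : ℝ) ^ S.card * zParam μ X ((T₁ ∪ T₂) ∪ S)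
        = ∑ p ∈ F₁.powerset ×ˢ F₂.powerset,
            ((-1 : ℝ) ^ p.1.card * zParam μ X (T₁ ∪ p.1))
              * ((-1 : ℝ) ^ p.2.card * zParam μ X (T₂ ∪ p.2)) := by
      refine Finset.sum_nbij' (fun S => (S ∩ F₁, S ∩ F₂)) (fun p => p.1 ∪ p.2)
        ?_ ?_ ?_ ?_ ?_
      · intro S _
        rw [Finset.mem_product]
        exact ⟨Finset.mem_powerset.2 Finset.inter_subset_right,
          Finset.mem_powerset.2 Finset.inter_subset_right⟩
      · intro p hp
        rw [Finset.mem_product] at hp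
        rw [Finset.mem_powerset]
        exact Finset.union_subset_union (Finset.mem_powerset.1 hp.1)
          (Finset.mem_powerset.1 hp.2)
      · intro S hS
        rw [Finset.mem_powerset] at hS
        show S ∩ F₁ ∪ S ∩ F₂ = S
        rw [← Finset.inter_union_distrib_left]
        exact Finset.inter_eq_left.2 hS
      · intro p hp
        rw [Finset.mem_product, Finset.mem_powerset, Finset.mem_powerset] at hp
        show ((p.1 ∪ p.2) ∩ F₁, (p.1 ∪ p.2) ∩ F₂) = p
        have e1 : (p.1 ∪ p.2) ∩ F₁ = p.1 := by
          rw [Finset.union_inter_distrib_right]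
          rw [Finset.inter_eq_left.2 hp.1]
          have : p.2 ∩ F₁ = ∅ := by
            rw [← Finset.disjoint_iff_inter_eq_empty]
            exact Finset.disjoint_of_subset_left hp.2 hF₁F₂.symm
          rw [this, Finset.union_empty]
        have e2 : (p.1 ∪ p.2) ∩ F₂ = p.2 := by
          rw [Finset.union_inter_distrib_right]
          rw [Finset.inter_eq_left.2 hp.2]
          have : p.1 ∩ F₂ = ∅ := by
            rw [← Finset.disjoint_iff_inter_eq_empty]
            exact Finset.disjoint_of_subset_left hp.1 hF₁F₂
          rw [this, Finset.empty_union]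
        rw [e1, e2]
      · intro S hS
        rw [Finset.mem_powerset] at hS
        have hdisjS : Disjoint (S ∩ F₁) (S ∩ F₂) :=
          Finset.disjoint_of_subset_left Finset.inter_subset_right
            (Finset.disjoint_of_subset_right Finset.inter_subset_right hF₁F₂)
        have hcard : S.card = (S ∩ F₁).card + (S ∩ F₂).card := by
          rw [← Finset.card_union_of_disjoint hdisjS, ← Finset.inter_union_distrib_left,
            Finset.inter_eq_left.2 hS]
        have hsets : (T₁ ∪ T₂) ∪ S = (T₁ ∪ (S ∩ F₁)) ∪ (T₂ ∪ (S ∩ F₂)) := by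
          conv_lhs => rw [← Finset.inter_eq_left.2 hS, Finset.inter_union_distrib_left]
          ext a
          simp only [Finset.mem_union]
          tauto
        have hzeq : zParam μ X ((T₁ ∪ (S ∩ F₁)) ∪ (T₂ ∪ (S ∩ F₂)))
            = zParam μ X (T₁ ∪ (S ∩ F₁)) * zParam μ X (T₂ ∪ (S ∩ F₂)) := by
          refine zParam_split_of_mult μ X hmult ?_
          refine Set.disjoint_of_subset ?_ ?_ hdisj
          · refine hsuppD₁ _ (Finset.union_subset (Finset.filter_subset _ _) ?_)
            exact Finset.inter_subset_right.trans (Finset.filter_subset _ _)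
          · refine hsuppD₂ _ (Finset.union_subset (Finset.filter_subset _ _) ?_)
            exact Finset.inter_subset_right.trans (Finset.filter_subset _ _)
        rw [hsets, hzeq, hcard, pow_add]
        ring
    rw [hstep, Finset.sum_product, Finset.sum_mul_sum]
  -- lift back to ℝ≥0∞
  rw [hE₁, hE₂]
  have hfin1 : μ (Ev X D₁ f) ≠ ⊤ := measure_ne_top μ _
  have hfin2 : μ (Ev X D₂ g) ≠ ⊤ := measure_ne_top μ _
  refine (ENNReal.toReal_eq_toReal_iff' (measure_ne_top μ _)
    (ENNReal.mul_ne_top hfin1 hfin2)).1 ?_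
  rw [ENNReal.toReal_mul, hInter]
  exact hreal

end Prob4

/-- A random network `X` is exchangeable and dissociated iff
(i) `z_C = z_{C′}` whenever `C`, `C′` are nonempty connected edge sets with isomorphic
associated graphs, and (ii) for every graph `x` on `N` (identified with its edge set
`A`), `P(X = x) = Σ_{A ⊆ B ⊆ D(N)} (−1)^{|B|−|A|} Π_C z_C`, where the product runs over
the edge sets `C` of the connected components of `B`. -/
theorem stmt12 {V Ω : Type*} [Fintype V] [DecidableEq V] [MeasurableSpace Ω]
    (μ : Measure Ω) [IsProbabilityMeasure μ] (X : Dyad V → Ω → Bool)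
    (hmeas : ∀ d : Dyad V, Measurable (X d)) :
    (IsExchangeable μ X ∧ IsDissociated μ X) ↔
      ((∀ C C' : Finset (Dyad V),
          IsConnEdgeSet (↑C : Set (Dyad V)) → IsConnEdgeSet (↑C' : Set (Dyad V)) →
          (∃ π : Equiv.Perm V, C.image (dyadPerm π) = C') →
          zParam μ X C = zParam μ X C') ∧
        (∀ A : Finset (Dyad V),
          (μ {ω | ∀ d : Dyad V, X d ω = true ↔ d ∈ A}).toReal
            = ∑ B ∈ Finset.univ.filter (fun B : Finset (Dyad V) => A ⊆ B),
                (-1 : ℝ) ^ (B.card - A.card) *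
                  ∏ C ∈ componentsOf B, zParam μ X C)) := by
  have hbridge : ∀ A : Finset (Dyad V),
      (μ {ω | ∀ d : Dyad V, X d ω = true ↔ d ∈ A}).toReal = prR μ X A := by
    intro A
    unfold prR
    rw [exact_event_eq]
  constructor
  · rintro ⟨hex, hdiss⟩
    constructor
    · rintro C C' _ _ ⟨π, hπ⟩
      rw [← hπ]
      exact (zParam_perm_of_exch μ X hmeas hex π C).symm
    · intro A
      rw [hbridge A, mobius_fwd (prR μ X) (zParam μ X) (zParam_sum_prR μ X hmeas) A]
      exact Finset.sum_congr rfl fun B _ => by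
        rw [zParam_mult_of_dissoc μ X hmeas hdiss B]
  · rintro ⟨hzinv, hform⟩
    have hform' : ∀ A : Finset (Dyad V), prR μ X A
        = ∑ B ∈ Finset.univ.filter (fun B => A ⊆ B),
            (-1 : ℝ) ^ (B.card - A.card) * ∏ C ∈ componentsOf B, zParam μ X C := by
      intro A
      rw [← hbridge A]
      exact hform A
    have hmult : ∀ A : Finset (Dyad V),
        zParam μ X A = ∏ C ∈ componentsOf A, zParam μ X C :=
      mobius_inv (prR μ X) (zParam μ X)
        (fun B => ∏ C ∈ componentsOf B, zParam μ X C)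
        (zParam_sum_prR μ X hmeas) hform'
    exact ⟨exch_of_prR_inv μ X hmeas
        (fun π A => prR_inv_of_formula μ X hmeas hzinv hform' π A),
      dissoc_of_mult μ X hmeas hmult⟩
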